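/- arXiv:2104.09148 — 4 statements merged into one kernel-verified Lean document; each statement's English description precedes it below -/
import Mathlib

section
/- Suppose there exists a coloring c:[ω₁]²→ω₁×ω with finite-to-one fibers such that for every k < ω and infinite pairwise disjoint family 𝒜 ⊆ [ω₁]^k, and every l < ω and uncountable pairwise disjoint family ℬ ⊆ [ω₁]^l, there exists a ∈ 𝒜 such that for every δ < ω₁ there are ι < ω and b ∈ ℬ with {α < β : c(α,β) = (δ,ι)} = a for every β ∈ b. Then for every ℓ∞-coherent partition p:[ω₁]²→ω there exists a coloring d:[ω₁]²→ω₁ such that: for every k < ω and infinite pairwise disjoint family 𝒜 ⊆ [ω₁]^k, and every l < ω and uncountable pairwise disjoint family ℬ ⊆ [ω₁]^l, there exists a ∈ 𝒜 such that for every k×l matrix ⟨τ_{n,m} : n < k, m < l⟩ of functions from ω to ω₁ there exists b ∈ ℬ with a < b such that d(a(n), b(m)) = τ_{n,m}(p(a(n), b(m))) for all n < k and m < l. -/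
noncomputable section

open Cardinal Set Ordinal

/-- The set of countable ordinals, as a type of order type `ω₁`. -/
abbrev Omega1 : Type := (Ordinal.omega 1).ToType

instance : Nonempty Omega1 :=
  Ordinal.nonempty_toType_iff.2
    (Ordinal.omega0_pos.trans Ordinal.omega0_lt_omega_one).ne'

/-- Proposition (M): there is a nonmeager set of reals of cardinality `ℵ₁`. -/
def PropM : Prop := ∃ X : Set ℝ, #X = Cardinal.aleph 1 ∧ ¬ IsMeagre X

/-- The `i`-th element of a finite subset of `ω₁` in increasing order
(junk value if `i` is out of range). -/
def nth (a : Finset Omega1) (i : ℕ) : Omega1 :=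
  (a.sort (· ≤ ·)).getD i (Classical.arbitrary Omega1)

/-- A partition `p : [ω₁]² → ω` is `ℓ∞`-coherent iff for all `β < β' < ω₁` the set of
integer differences `{p(α,β) - p(α,β') : α < β}` is finite. -/
def LinftyCoherent (p : Omega1 → Omega1 → ℕ) : Prop :=
  ∀ β β' : Omega1, β < β' →
    {z : ℤ | ∃ α : Omega1, α < β ∧ z = (p α β : ℤ) - (p α β' : ℤ)}.Finite

/-! ### Auxiliary lemmas -/

open scoped Classical

lemma st4_mk_Omega1 : #Omega1 = Cardinal.aleph 1 := by
  rw [Cardinal.mk_toType, Ordinal.card_omega]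

lemma st4_countable_Iic (β : Omega1) : (Set.Iic β).Countable := by
  set e := (Ordinal.ToType.mk : Set.Iio (Ordinal.omega 1) ≃o Omega1) with he
  set o : Ordinal := (e.symm β : Set.Iio (Ordinal.omega 1)).1 with ho_def
  have ho : o < Ordinal.omega 1 := (e.symm β).2
  have ho1 : Order.succ o < Ordinal.omega 1 := (Cardinal.isSuccLimit_omega 1).succ_lt ho
  have hc1 : (Order.succ o).card ≤ ℵ₀ := by
    have h1 : (Order.succ o).card < Cardinal.aleph 1 := by
      apply Cardinal.lt_ord.mp
      rwa [Cardinal.ord_aleph]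
    rwa [← Cardinal.succ_aleph0, Order.lt_succ_iff] at h1
  have hIio : (Set.Iio (Order.succ o)).Countable := by
    rw [← Cardinal.le_aleph0_iff_set_countable, Ordinal.mk_Iio_ordinal,
      Cardinal.lift_le_aleph0]
    exact hc1
  apply Set.MapsTo.countable_of_injOn
    (f := fun x : Omega1 => ((e.symm x : Set.Iio (Ordinal.omega 1)) : Ordinal))
    ?_ ?_ hIio
  · intro x hx
    have hle : e.symm x ≤ e.symm β := e.symm.le_iff_le.mpr hx
    have : ((e.symm x : Set.Iio (Ordinal.omega 1)) : Ordinal) ≤ o := hle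
    exact Order.lt_succ_iff.mpr this
  · intro x _ y _ hxy
    have : e.symm x = e.symm y := Subtype.ext hxy
    exact e.symm.injective this

lemma st4_exists_ub {Y : Set Omega1} (hY : Y.Countable) :
    ∃ β : Omega1, ∀ y ∈ Y, y < β := by
  by_contra hcon
  push_neg at hcon
  have hcover : (Set.univ : Set Omega1) ⊆ ⋃ y ∈ Y, Set.Iic y := by
    intro β _
    obtain ⟨y, hy, hle⟩ := hcon β
    exact Set.mem_biUnion hy hle
  have huniv : (Set.univ : Set Omega1).Countable :=
    Set.Countable.mono hcover (hY.biUnion fun y _ => st4_countable_Iic y)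
  have h2 : Countable Omega1 := Set.countable_univ_iff.mp huniv
  have h3 : #Omega1 ≤ ℵ₀ := Cardinal.mk_le_aleph0
  rw [st4_mk_Omega1] at h3
  exact absurd h3 (not_le.mpr Cardinal.aleph0_lt_aleph_one)

lemma st4_uncountable_fiber {X C : Type*} [Countable C] {S : Set X}
    (hS : ¬ S.Countable) (f : X → C) :
    ∃ c : C, ¬ {x ∈ S | f x = c}.Countable := by
  by_contra hcon
  push_neg at hcon
  apply hS
  have hrw : S = ⋃ c : C, {x ∈ S | f x = c} := by
    ext x
    simp only [Set.mem_iUnion, Set.mem_setOf_eq]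
    exact ⟨fun h => ⟨f x, h, rfl⟩, fun ⟨c, h, _⟩ => h⟩
  rw [hrw]
  exact Set.countable_iUnion hcon

lemma st4_nth_mem {b : Finset Omega1} {i : ℕ} (h : i < b.card) : nth b i ∈ b := by
  have hl : i < (b.sort (· ≤ ·)).length := by rwa [Finset.length_sort]
  rw [nth, List.getD_eq_getElem _ _ hl]
  exact (Finset.mem_sort (α := Omega1) (· ≤ ·)).mp (List.getElem_mem hl)

lemma st4_nth_ne {b : Finset Omega1} {i j : ℕ} (hi : i < b.card) (hj : j < b.card)
    (hij : i ≠ j) : nth b i ≠ nth b j := by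
  have hli : i < (b.sort (· ≤ ·)).length := by rwa [Finset.length_sort]
  have hlj : j < (b.sort (· ≤ ·)).length := by rwa [Finset.length_sort]
  rw [nth, nth, List.getD_eq_getElem _ _ hli, List.getD_eq_getElem _ _ hlj]
  intro hEq
  exact hij ((b.sort_nodup (· ≤ ·)).getElem_inj_iff.mp hEq)

lemma st4_indexOf_nth {a : Finset Omega1} {i : ℕ} (h : i < a.card) :
    (a.sort (· ≤ ·)).idxOf (nth a i) = i := by
  have hl : i < (a.sort (· ≤ ·)).length := by rwa [Finset.length_sort]
  rw [nth, List.getD_eq_getElem _ _ hl]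
  exact List.Nodup.idxOf_getElem (a.sort_nodup (· ≤ ·)) i hl

lemma st4_getD_range_map {X : Type*} (junk : X) (f : ℕ → X) (B i : ℕ) (h : i < B) :
    ((List.range B).map f).getD i junk = f i := by
  rw [List.getD_eq_getElem _ _ (by simpa using h)]
  simp

/-- The coloring built from the data. -/
def st4_dFun (c : Omega1 → Omega1 → Omega1 × ℕ) (p : Omega1 → Omega1 → ℕ)
    (rr : Omega1 → ℕ → Bool) (D : Omega1 → Finset ℕ × List Omega1) (junk : Omega1)
    (α β : Omega1) : Omega1 :=
  (D (c α β).1).2.getD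
    (Encodable.encode
      (((if hF : {γ : Omega1 | γ < β ∧ c γ β = c α β}.Finite
          then (hF.toFinset.sort (· ≤ ·)).idxOf α else 0),
        (D (c α β).1).1.filter (fun i => rr β i = true),
        p α β) : ℕ × Finset ℕ × ℕ))
    junk

/-- From a coloring `c` as in statement 3, for every `ℓ∞`-coherent partition
`p : [ω₁]² → ω` there is a coloring `d : [ω₁]² → ω₁` such that for every `k` and
infinite pairwise disjoint `𝒜 ⊆ [ω₁]^k`, and every `l` and uncountable pairwise
disjoint `ℬ ⊆ [ω₁]^l`, there is `a ∈ 𝒜` such that for every matrix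
`⟨τ_{n,m} : n < k, m < l⟩` of functions from `ω` to `ω₁` there is `b ∈ ℬ` with `a < b`
and `d(a(n), b(m)) = τ_{n,m}(p(a(n), b(m)))` for all `n < k`, `m < l`. -/
theorem statement4
    (h : ∃ c : Omega1 → Omega1 → Omega1 × ℕ,
      (∀ β : Omega1, ∀ t : Omega1 × ℕ, {α : Omega1 | α < β ∧ c α β = t}.Finite) ∧
      ∀ k : ℕ, ∀ 𝒜 : Set (Finset Omega1), 𝒜.Infinite → (∀ a ∈ 𝒜, a.card = k) →
        (∀ a ∈ 𝒜, ∀ a' ∈ 𝒜, a ≠ a' → Disjoint a a') →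
      ∀ l : ℕ, ∀ ℬ : Set (Finset Omega1), ¬ ℬ.Countable → (∀ b ∈ ℬ, b.card = l) →
        (∀ b ∈ ℬ, ∀ b' ∈ ℬ, b ≠ b' → Disjoint b b') →
      ∃ a ∈ 𝒜, ∀ δ : Omega1, ∃ ι : ℕ, ∃ b ∈ ℬ, ∀ β ∈ b,
        {α : Omega1 | α < β ∧ c α β = (δ, ι)} = ↑a) :
    ∀ p : Omega1 → Omega1 → ℕ, LinftyCoherent p →
      ∃ d : Omega1 → Omega1 → Omega1,
        ∀ k : ℕ, ∀ 𝒜 : Set (Finset Omega1), 𝒜.Infinite → (∀ a ∈ 𝒜, a.card = k) →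
          (∀ a ∈ 𝒜, ∀ a' ∈ 𝒜, a ≠ a' → Disjoint a a') →
        ∀ l : ℕ, ∀ ℬ : Set (Finset Omega1), ¬ ℬ.Countable → (∀ b ∈ ℬ, b.card = l) →
          (∀ b ∈ ℬ, ∀ b' ∈ ℬ, b ≠ b' → Disjoint b b') →
        ∃ a ∈ 𝒜, ∀ τ : Fin k → Fin l → ℕ → Omega1, ∃ b ∈ ℬ,
          (∀ α ∈ a, ∀ β ∈ b, α < β) ∧
          ∀ (n : Fin k) (m : Fin l),
            d (nth a n) (nth b m) = τ n m (p (nth a n) (nth b m)) := by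
  intro p hp
  obtain ⟨c, hcfin, hc⟩ := h
  -- an injection of `ω₁` into the reals (as functions `ℕ → Bool`)
  obtain ⟨rr⟩ : Nonempty (Omega1 ↪ (ℕ → Bool)) := by
    rw [← Cardinal.le_def]
    have h1 : #(ℕ → Bool) = 2 ^ ℵ₀ := by
      rw [Cardinal.mk_arrow, Cardinal.mk_bool, Cardinal.mk_nat, Cardinal.lift_id,
        Cardinal.lift_id]
    rw [st4_mk_Omega1, h1, Cardinal.two_power_aleph0]
    exact Cardinal.aleph_one_le_continuum
  -- an embedding of codes into `ω₁`
  obtain ⟨g⟩ : Nonempty ((Finset ℕ × List Omega1) ↪ Omega1) := by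
    rw [← Cardinal.le_def]
    have h2 : #(Finset ℕ × List Omega1) ≤ Cardinal.aleph 1 := by
      have hl : #(List Omega1) = Cardinal.aleph 1 := by
        rw [Cardinal.mk_list_eq_max_mk_aleph0, st4_mk_Omega1]
        exact max_eq_left (Cardinal.aleph0_le_aleph 1)
      calc #(Finset ℕ × List Omega1) = #(Finset ℕ) * #(List Omega1) := by
            rw [Cardinal.mk_prod, Cardinal.lift_id, Cardinal.lift_id]
        _ ≤ Cardinal.aleph 1 * Cardinal.aleph 1 := by
            apply mul_le_mul'
            · exact le_trans Cardinal.mk_le_aleph0 (Cardinal.aleph0_le_aleph 1)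
            · rw [hl]
        _ = Cardinal.aleph 1 := Cardinal.mul_eq_self (Cardinal.aleph0_le_aleph 1)
    rwa [st4_mk_Omega1]
  set junk : Omega1 := Classical.arbitrary Omega1 with hjunk
  set D : Omega1 → Finset ℕ × List Omega1 := Function.invFun g with hDdef
  have hD : ∀ x, D (g x) = x := fun x => Function.leftInverse_invFun g.injective x
  refine ⟨st4_dFun c p rr D junk, ?_⟩
  intro k 𝒜 hAinf hAcard hAdisj l ℬ hBunc hBcard hBdisj
  -- a countably infinite subfamily of 𝒜
  have hAinf' : Infinite ↥𝒜 := hAinf.to_subtype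
  set F0 : ℕ ↪ ↥𝒜 := Infinite.natEmbedding ↥𝒜 with hF0
  set A0 : Set (Finset Omega1) := Set.range (fun n => (F0 n : Finset Omega1)) with hA0
  have hA0sub : A0 ⊆ 𝒜 := by rintro _ ⟨n, rfl⟩; exact (F0 n).2
  have hA0count : A0.Countable := Set.countable_range _
  have hA0inf : A0.Infinite :=
    Set.infinite_range_of_injective (Subtype.val_injective.comp F0.injective)
  -- a bound above all elements of members of A0
  have hYc : (⋃ a ∈ A0, (↑a : Set Omega1)).Countable :=
    hA0count.biUnion fun a _ => a.finite_toSet.countable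
  obtain ⟨βs, hβs⟩ := st4_exists_ub hYc
  have hbound : ∀ a ∈ A0, ∀ α ∈ a, α < βs := by
    intro a ha α hα
    exact hβs α (Set.mem_biUnion ha hα)
  -- the members of ℬ entirely above βs
  set B1 : Set (Finset Omega1) := {b ∈ ℬ | ∀ β ∈ b, βs < β} with hB1
  have hB1sub : B1 ⊆ ℬ := fun b hb => hb.1
  have hB1unc : ¬ B1.Countable := by
    intro hcnt
    apply hBunc
    have hdiff : (ℬ \ B1).Countable := by
      set w : Finset Omega1 → Omega1 :=
        fun b => if h : ∃ β ∈ b, ¬ βs < β then h.choose else junk with hw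
      have hwspec : ∀ b ∈ ℬ \ B1, w b ∈ b ∧ ¬ βs < w b := by
        intro b hb
        have hex : ∃ β ∈ b, ¬ βs < β := by
          by_contra hno
          push_neg at hno
          exact hb.2 ⟨hb.1, hno⟩
        rw [hw]
        simp only [dif_pos hex]
        exact hex.choose_spec
      apply Set.MapsTo.countable_of_injOn (f := w) (t := Set.Iic βs) ?_ ?_
        (st4_countable_Iic βs)
      · intro b hb
        exact not_lt.mp (hwspec b hb).2
      · intro b hb b' hb' hww
        by_contra hne
        have hdisj := hBdisj b hb.1 b' hb'.1 hne
        have h1 := (hwspec b hb).1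
        have h2 := (hwspec b' hb').1
        rw [hww] at h1
        exact Finset.disjoint_left.mp hdisj h1 h2
    have := hcnt.union hdiff
    rwa [Set.union_diff_cancel hB1sub] at this
  -- data for the pigeonhole
  set Edata : Finset Omega1 → Fin l → Finset ℤ := fun b m =>
    if h : {z : ℤ | ∃ α : Omega1, α < βs ∧
        z = (p α βs : ℤ) - (p α (nth b m) : ℤ)}.Finite then h.toFinset else ∅
    with hEdata
  set idiff : Finset Omega1 → Fin l → Fin l → ℕ := fun b m m' =>
    if h : rr (nth b m) ≠ rr (nth b m') then (Function.ne_iff.mp h).choose else 0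
    with hidiff
  set Ndata : Finset Omega1 → Finset ℕ := fun b =>
    Finset.image (fun q : Fin l × Fin l => idiff b q.1 q.2) Finset.univ with hNdata
  set fdata : Finset Omega1 →
      (Fin l → Finset ℤ) × (Finset ℕ) × (Fin l → Finset ℕ) := fun b =>
    (Edata b, Ndata b, fun m => (Ndata b).filter (fun i => rr (nth b m) i = true))
    with hfdata_def
  obtain ⟨⟨Ev, Nv, σ⟩, hB3unc⟩ := st4_uncountable_fiber hB1unc fdata
  set B3 : Set (Finset Omega1) := {x ∈ B1 | fdata x = (Ev, Nv, σ)} with hB3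
  have hB3subB1 : B3 ⊆ B1 := fun b hb => hb.1
  have hB3sub : B3 ⊆ ℬ := fun b hb => hB1sub (hB3subB1 hb)
  -- apply the hypothesis
  obtain ⟨a, haA0, hmain⟩ := hc k A0 hA0inf
    (fun a ha => hAcard a (hA0sub ha))
    (fun a ha a' ha' => hAdisj a (hA0sub ha) a' (hA0sub ha'))
    l B3 hB3unc (fun b hb => hBcard b (hB3sub hb))
    (fun b hb b' hb' => hBdisj b (hB3sub hb) b' (hB3sub hb'))
  have hacard : a.card = k := hAcard a (hA0sub haA0)
  have haβs : ∀ α ∈ a, α < βs := hbound a haA0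
  refine ⟨a, hA0sub haA0, ?_⟩
  -- injectivity of the traces σ
  have hB3ne : B3.Nonempty := by
    rcases Set.eq_empty_or_nonempty B3 with hemp | hne
    · exact absurd (hemp ▸ Set.countable_empty) hB3unc
    · exact hne
  obtain ⟨b0, hb0⟩ := hB3ne
  have hb0card : b0.card = l := hBcard b0 (hB3sub hb0)
  have hNb0 : Ndata b0 = Nv := congrArg (fun x => x.2.1) hb0.2
  have hσb0 : ∀ m : Fin l, σ m = (Ndata b0).filter (fun i => rr (nth b0 m) i = true) :=
    fun m => (congrFun (congrArg (fun x => x.2.2) hb0.2) m).symm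
  have hσinj : Function.Injective σ := by
    intro m m' heq
    by_contra hne
    have hvne : (m : ℕ) ≠ (m' : ℕ) := fun hv => hne (Fin.ext hv)
    have hnth : nth b0 m ≠ nth b0 m' :=
      st4_nth_ne (hb0card ▸ m.isLt) (hb0card ▸ m'.isLt) hvne
    have hrrne : rr (nth b0 m) ≠ rr (nth b0 m') := fun e => hnth (rr.injective e)
    have hine : rr (nth b0 m) (idiff b0 m m') ≠ rr (nth b0 m') (idiff b0 m m') := by
      simp only [hidiff, dif_pos hrrne]
      exact (Function.ne_iff.mp hrrne).choose_spec
    have hiN : idiff b0 m m' ∈ Ndata b0 := by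
      simp only [hNdata]
      exact Finset.mem_image.mpr ⟨(m, m'), Finset.mem_univ _, rfl⟩
    have heq' : (Ndata b0).filter (fun i => rr (nth b0 m) i = true) =
        (Ndata b0).filter (fun i => rr (nth b0 m') i = true) := by
      rw [← hσb0 m, ← hσb0 m']; exact heq
    have hmem := Finset.ext_iff.mp heq' (idiff b0 m m')
    simp only [Finset.mem_filter, hiN, true_and] at hmem
    apply hine
    cases hx : rr (nth b0 m) (idiff b0 m m') <;>
      cases hy : rr (nth b0 m') (idiff b0 m m')
    · rfl
    · rw [hx, hy] at hmem
      exact absurd (hmem.mpr rfl) (by simp)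
    · rw [hx, hy] at hmem
      exact absurd (hmem.mp rfl) (by simp)
    · rfl
  intro τ
  -- the lookup table
  set totval : ℕ × Finset ℕ × ℕ → Omega1 := fun key =>
    if h : ∃ q : Fin k × Fin l, (q.1 : ℕ) = key.1 ∧ σ q.2 = key.2.1
    then τ h.choose.1 h.choose.2 key.2.2 else junk with htotval
  set keyOf : (Fin k × Fin l) × ℤ → ℕ := fun q =>
    Encodable.encode
      (((q.1.1 : ℕ), σ q.1.2, ((p (nth a q.1.1) βs : ℤ) - q.2).toNat) : ℕ × Finset ℕ × ℕ)
    with hkeyOf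
  set allK : Finset ℕ := (Finset.univ : Finset (Fin k × Fin l)).biUnion
    (fun nm => (Ev nm.2).image (fun z => keyOf (nm, z))) with hallK
  set B : ℕ := allK.sup id + 1 with hB
  set flist : List Omega1 := (List.range B).map
    (fun i => totval (((Encodable.decode i : Option (ℕ × Finset ℕ × ℕ))).getD (0, ∅, 0)))
    with hflist
  set δ : Omega1 := g (Nv, flist) with hδ
  have hDδ : D δ = (Nv, flist) := hD _
  obtain ⟨ι, b, hbB3, hfib⟩ := hmain δ
  have hbB1 : b ∈ B1 := hB3subB1 hbB3
  have hbℬ : b ∈ ℬ := hB1sub hbB1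
  have hbcard : b.card = l := hBcard b hbℬ
  have hbE : Edata b = Ev := congrArg (fun x => x.1) hbB3.2
  have hbN : Ndata b = Nv := congrArg (fun x => x.2.1) hbB3.2
  have hbσ : ∀ m : Fin l, σ m = (Ndata b).filter (fun i => rr (nth b m) i = true) :=
    fun m => (congrFun (congrArg (fun x => x.2.2) hbB3.2) m).symm
  refine ⟨b, hbℬ, ?_, ?_⟩
  · intro α hα β hβ
    have hset := hfib β hβ
    have : α ∈ {γ : Omega1 | γ < β ∧ c γ β = (δ, ι)} := by
      rw [hset]; exact hα
    exact this.1
  · intro n m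
    set α : Omega1 := nth a n with hαdef
    set β : Omega1 := nth b m with hβdef
    have hna : (n : ℕ) < a.card := hacard ▸ n.isLt
    have hmb : (m : ℕ) < b.card := hbcard ▸ m.isLt
    have hαa : α ∈ a := st4_nth_mem hna
    have hβb : β ∈ b := st4_nth_mem hmb
    have hset := hfib β hβb
    have hαmem : α ∈ {γ : Omega1 | γ < β ∧ c γ β = (δ, ι)} := by
      rw [hset]; exact hαa
    obtain ⟨hαβ, hcαβ⟩ := hαmem
    have hβsβ : βs < β := hbB1.2 β hβb
    -- the fiber is `a`
    have hFset : {γ : Omega1 | γ < β ∧ c γ β = (δ, ι)} = (↑a : Set Omega1) := hset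
    have hFfin : {γ : Omega1 | γ < β ∧ c γ β = (δ, ι)}.Finite := by
      rw [hFset]; exact a.finite_toSet
    -- the p-value set
    have hZfin : {z : ℤ | ∃ γ : Omega1, γ < βs ∧
        z = (p γ βs : ℤ) - (p γ β : ℤ)}.Finite := hp βs β hβsβ
    set z : ℤ := (p α βs : ℤ) - (p α β : ℤ) with hz
    have hzmem : z ∈ Ev m := by
      have h1 : z ∈ {z : ℤ | ∃ γ : Omega1, γ < βs ∧
          z = (p γ βs : ℤ) - (p γ β : ℤ)} := ⟨α, haβs α hαa, rfl⟩
      have h2 : Edata b m = hZfin.toFinset := by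
        rw [hEdata]
        simp only [← hβdef]
        rw [dif_pos hZfin]
      rw [← hbE, h2]
      exact hZfin.mem_toFinset.mpr h1
    -- the key
    set E0 : ℕ := Encodable.encode
      (((n : ℕ), σ m, p α β) : ℕ × Finset ℕ × ℕ) with hE0
    have hkey : keyOf ((n, m), z) = E0 := by
      have h1 : ((p (nth a n) βs : ℤ) - z).toNat = p α β := by
        rw [hz, ← hαdef, sub_sub_cancel, Int.toNat_natCast]
      simp only [hkeyOf, hE0, h1, ← hαdef]
      exact congrArg (fun x => Encodable.encode (((n : ℕ), σ m, x) : ℕ × Finset ℕ × ℕ)) h1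
    have hE0mem : E0 ∈ allK := by
      rw [hallK]
      refine Finset.mem_biUnion.mpr ⟨(n, m), Finset.mem_univ _, ?_⟩
      exact Finset.mem_image.mpr ⟨z, hzmem, hkey⟩
    have hE0lt : E0 < B := by
      rw [hB]
      exact Nat.lt_succ_of_le (Finset.le_sup (f := id) hE0mem)
    -- compute the lookup
    have hlook : flist.getD E0 junk = τ n m (p α β) := by
      rw [hflist, st4_getD_range_map junk _ B E0 hE0lt, hE0, Encodable.encodek,
        Option.getD_some]
      have hex : ∃ q : Fin k × Fin l,
          (q.1 : ℕ) = (((n : ℕ), σ m, p α β) : ℕ × Finset ℕ × ℕ).1 ∧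
          σ q.2 = (((n : ℕ), σ m, p α β) : ℕ × Finset ℕ × ℕ).2.1 := ⟨(n, m), rfl, rfl⟩
      have hch : hex.choose = (n, m) := by
        obtain ⟨h1, h2⟩ := hex.choose_spec
        exact Prod.ext (Fin.ext h1) (hσinj h2)
      simp only [htotval]
      rw [dif_pos hex, hch]
    -- compute d
    simp only [st4_dFun]
    simp only [hcαβ, hDδ]
    rw [dif_pos hFfin]
    have htoF : hFfin.toFinset = a := by
      apply Finset.coe_injective
      rw [Set.Finite.coe_toFinset]
      exact hFset
    rw [htoF, st4_indexOf_nth hna]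
    have hσm : Nv.filter (fun i => rr β i = true) = σ m := by
      rw [hbσ m, hbN, hβdef]
    rw [hσm]
    exact hlook
end
end

section
/- Suppose that for every ℓ∞-coherent partition p:[ω₁]²→ω there exists a coloring d:[ω₁]²→ω₁ such that for every k < ω and infinite pairwise disjoint family 𝒜 ⊆ [ω₁]^k, and every l < ω and uncountable pairwise disjoint family ℬ ⊆ [ω₁]^l, there exists a ∈ 𝒜 such that for every k×l matrix ⟨τ_{n,m}⟩ of functions from ω to ω₁ there exists b ∈ ℬ with a < b such that d(a(n), b(m)) = τ_{n,m}(p(a(n), b(m))) for all n < k, m < l. Then there exists a coloring e:[ω₁]²→ω such that for every infinite A ⊆ ω₁ and every uncountable B ⊆ ω₁ there is α ∈ A such that {e(α,β) : β ∈ B, β > α} = ω. -/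
noncomputable section

open Cardinal Set Ordinal

instance : Infinite Omega1 := by
  rw [Cardinal.infinite_iff, Omega1, Cardinal.mk_toType, Ordinal.card_omega]
  exact Cardinal.aleph0_le_aleph 1

lemma nth_singleton (α : Omega1) : nth {α} 0 = α := by
  simp [nth, Finset.sort_singleton]

/-- If for every `ℓ∞`-coherent partition `p` there is a coloring `d` as in statement 4,
then there is a coloring `e : [ω₁]² → ω` such that for every infinite `A ⊆ ω₁` and
uncountable `B ⊆ ω₁` there is `α ∈ A` with `{e(α,β) : β ∈ B, β > α} = ω`. -/
theorem statement5
    (h : ∀ p : Omega1 → Omega1 → ℕ, LinftyCoherent p →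
      ∃ d : Omega1 → Omega1 → Omega1,
        ∀ k : ℕ, ∀ 𝒜 : Set (Finset Omega1), 𝒜.Infinite → (∀ a ∈ 𝒜, a.card = k) →
          (∀ a ∈ 𝒜, ∀ a' ∈ 𝒜, a ≠ a' → Disjoint a a') →
        ∀ l : ℕ, ∀ ℬ : Set (Finset Omega1), ¬ ℬ.Countable → (∀ b ∈ ℬ, b.card = l) →
          (∀ b ∈ ℬ, ∀ b' ∈ ℬ, b ≠ b' → Disjoint b b') →
        ∃ a ∈ 𝒜, ∀ τ : Fin k → Fin l → ℕ → Omega1, ∃ b ∈ ℬ,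
          (∀ α ∈ a, ∀ β ∈ b, α < β) ∧
          ∀ (n : Fin k) (m : Fin l),
            d (nth a n) (nth b m) = τ n m (p (nth a n) (nth b m))) :
    ∃ e : Omega1 → Omega1 → ℕ,
      ∀ A : Set Omega1, A.Infinite → ∀ B : Set Omega1, ¬ B.Countable →
        ∃ α ∈ A, {n : ℕ | ∃ β ∈ B, α < β ∧ e α β = n} = Set.univ := by
  obtain ⟨d, hd⟩ := h (fun _ _ => 0) (by
    intro β β' _
    refine (Set.finite_singleton (0 : ℤ)).subset ?_
    rintro z ⟨α, -, rfl⟩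
    simp)
  set g : ℕ ↪ Omega1 := Infinite.natEmbedding Omega1 with hg
  refine ⟨fun α β => Function.invFun g (d α β), ?_⟩
  intro A hA B hB
  have hsing : Function.Injective (fun α : Omega1 => ({α} : Finset Omega1)) :=
    fun _ _ hxy => Finset.singleton_injective hxy
  obtain ⟨a, ⟨α, hαA, rfl⟩, hall⟩ := hd 1 ((fun α => ({α} : Finset Omega1)) '' A)
    (hA.image (hsing.injOn))
    (by rintro a ⟨α, -, rfl⟩; simp)
    (by
      rintro a ⟨α, -, rfl⟩ a' ⟨α', -, rfl⟩ hne
      rw [Finset.disjoint_singleton]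
      exact fun e => hne (by rw [e]))
    1 ((fun β => ({β} : Finset Omega1)) '' B)
    (by
      intro hc
      exact hB (((hc.preimage hsing)).mono (Set.subset_preimage_image _ _)))
    (by rintro b ⟨β, -, rfl⟩; simp)
    (by
      rintro b ⟨β, -, rfl⟩ b' ⟨β', -, rfl⟩ hne
      rw [Finset.disjoint_singleton]
      exact fun e => hne (by rw [e]))
  refine ⟨α, hαA, ?_⟩
  ext n
  simp only [Set.mem_setOf_eq, Set.mem_univ, iff_true]
  obtain ⟨b, ⟨β, hβB, rfl⟩, hlt, heq⟩ := hall (fun _ _ _ => g n)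
  refine ⟨β, hβB, hlt α (Finset.mem_singleton_self α) β (Finset.mem_singleton_self β), ?_⟩
  have := heq 0 0
  simp only [Fin.val_zero, nth_singleton] at this
  rw [this]
  exact Function.leftInverse_invFun g.injective n
end
end

section
/- 𝔡 = ℵ₁ if and only if there exists a partition p:[ω₁]²→ω with injective, almost-disjoint and Cohen fibers which satisfies: for every ordinal ε < ω₁ and every function h:ε→ω there exists γ < ω₁ such that for every finite set b ⊆ ω₁ \ γ there exists a finite set Δ ⊆ ε such that (i) for all α ∈ ε \ Δ and β ∈ b, h(α) < p(α,β), and (ii) the map (α,β) ↦ p(α,β) is injective on (ε \ Δ) × b. -/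
noncomputable section

open Cardinal Set Ordinal

/-- The dominating number `𝔡`: the least cardinality of a family `D ⊆ ωω` such that
every `f : ω → ω` is eventually dominated (in the sense `f n ≤ d n` for all but
finitely many `n`) by some member of `D`. -/
def domNumber : Cardinal :=
  sInf { κ : Cardinal | ∃ D : Set (ℕ → ℕ), #D = κ ∧
    ∀ f : ℕ → ℕ, ∃ d ∈ D, ∀ᶠ n in Filter.atTop, f n ≤ d n }

/-- `p` has injective fibers iff `p(α,β) ≠ p(α',β)` whenever `α < α' < β`. -/
def InjectiveFibers (p : Omega1 → Omega1 → ℕ) : Prop :=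
  ∀ α α' β : Omega1, α < α' → α' < β → p α β ≠ p α' β

/-- `p` has almost-disjoint fibers iff for all `β < β' < ω₁` the set
`{p(α,β) : α < β} ∩ {p(α,β') : α < β}` is finite. -/
def AlmostDisjointFibers (p : Omega1 → Omega1 → ℕ) : Prop :=
  ∀ β β' : Omega1, β < β' →
    ({n : ℕ | ∃ α : Omega1, α < β ∧ p α β = n} ∩
      {n : ℕ | ∃ α : Omega1, α < β ∧ p α β' = n}).Finite

/-- `p` has Cohen fibers iff for every injection `g` from a finite subset of `ω₁` to
`ω`, the set of `β < ω₁` such that `g(α) = p(α,β)` for all `α ∈ a` with `α < β` is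
cofinal in `ω₁`. -/
def CohenFibers (p : Omega1 → Omega1 → ℕ) : Prop :=
  ∀ (a : Finset Omega1) (g : Omega1 → ℕ), Set.InjOn g ↑a →
    ∀ γ : Omega1, ∃ β : Omega1, γ ≤ β ∧ ∀ α ∈ a, α < β → p α β = g α

namespace S13

lemma mk_Omega1 : #Omega1 = Cardinal.aleph 1 := by
  exact (Cardinal.mk_toType _).trans (Ordinal.card_omega 1)

lemma countable_Iio (β : Omega1) : {α : Omega1 | α < β}.Countable := by
  rw [Cardinal.countable_iff_lt_aleph_one]
  have h1 := @Ordinal.card_typein ((Ordinal.omega 1).ToType) (·<·) isWellOrder_lt β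
  have h2 := Ordinal.typein_lt_self β
  have h3 := Cardinal.lt_ord.1 (show _ < (Cardinal.aleph 1).ord by
    rw [Cardinal.ord_aleph]; exact h2)
  rw [h1] at h3
  exact h3

lemma not_countable_univ : ¬ (Set.univ : Set Omega1).Countable := by
  rw [Cardinal.countable_iff_lt_aleph_one, Cardinal.mk_univ, mk_Omega1]
  exact lt_irrefl _

lemma unbounded_of_not_countable {s : Set Omega1} (h : ¬ s.Countable) (γ : Omega1) :
    ∃ β ∈ s, γ ≤ β := by
  by_contra hc
  push_neg at hc
  exact h ((countable_Iio γ).mono fun β hβ => hc β hβ)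

lemma exists_gt (x : Omega1) : ∃ y, x < y := by
  by_contra hc
  push_neg at hc
  apply not_countable_univ
  refine ((countable_Iio x).insert x).mono fun y _ => ?_
  rcases eq_or_lt_of_le (hc y) with h | h
  · exact Set.mem_insert_iff.2 (Or.inl h)
  · exact Set.mem_insert_iff.2 (Or.inr h)

instance : Infinite Omega1 := by
  rw [Cardinal.infinite_iff, mk_Omega1]
  exact Cardinal.aleph0_le_aleph 1



lemma domNumber_mem : ∃ D : Set (ℕ → ℕ), #D = domNumber ∧
    ∀ f : ℕ → ℕ, ∃ d ∈ D, ∀ᶠ n in Filter.atTop, f n ≤ d n := by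
  have hne : { κ : Cardinal | ∃ D : Set (ℕ → ℕ), #D = κ ∧
      ∀ f : ℕ → ℕ, ∃ d ∈ D, ∀ᶠ n in Filter.atTop, f n ≤ d n }.Nonempty :=
    ⟨#(Set.univ : Set (ℕ → ℕ)), Set.univ, rfl,
      fun f => ⟨f, Set.mem_univ f, Filter.Eventually.of_forall fun _ => le_rfl⟩⟩
  exact csInf_mem hne

lemma aleph_one_le_domNumber : Cardinal.aleph 1 ≤ domNumber := by
  obtain ⟨D, hD, hdom⟩ := domNumber_mem
  rw [← hD, ← Cardinal.succ_aleph0, Order.succ_le_iff]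
  by_contra hle
  push_neg at hle
  have hc : D.Countable := Cardinal.le_aleph0_iff_set_countable.1 hle
  obtain ⟨d0, hd0, -⟩ := hdom 0
  obtain ⟨u, hu⟩ := hc.exists_eq_range ⟨d0, hd0⟩
  set f : ℕ → ℕ := fun n => (Finset.range (n + 1)).sup (fun k => u k n) + 1 with hf
  obtain ⟨dd, hdD, hev⟩ := hdom f
  rw [hu] at hdD
  obtain ⟨k, rfl⟩ := hdD
  obtain ⟨N, hN⟩ := Filter.eventually_atTop.1 hev
  have h1 := hN (max N k) (le_max_left _ _)
  have h2 : u k (max N k) ≤ (Finset.range (max N k + 1)).sup (fun j => u j (max N k)) :=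
    Finset.le_sup (f := fun j => u j (max N k)) (Finset.mem_range.2 (lt_of_le_of_lt (le_max_right N k) (Nat.lt_succ_self _)))
  rw [hf] at h1
  simp only at h1
  omega

lemma domNumber_le {D : Set (ℕ → ℕ)}
    (hdom : ∀ f : ℕ → ℕ, ∃ d ∈ D, ∀ᶠ n in Filter.atTop, f n ≤ d n) :
    domNumber ≤ #D :=
  csInf_le' ⟨D, rfl, hdom⟩

/-! ### The backward direction -/

/-- The canonical enumeration of an initial `ω`-segment of `Omega1`. -/
def eSeq (n : ℕ) : Omega1 :=
  Ordinal.ToType.mk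
    ⟨(n : Ordinal), (Ordinal.nat_lt_omega0 n).trans Ordinal.omega0_lt_omega_one⟩

def epsZero : Omega1 :=
  Ordinal.ToType.mk ⟨Ordinal.omega0, Ordinal.omega0_lt_omega_one⟩

lemma eSeq_lt (n : ℕ) : eSeq n < epsZero := by
  rw [eSeq, epsZero, OrderIso.lt_iff_lt]
  exact Ordinal.nat_lt_omega0 n

lemma eSeq_injective : Function.Injective eSeq := by
  intro m n h
  rw [eSeq, eSeq, EmbeddingLike.apply_eq_iff_eq] at h
  have := Subtype.mk_eq_mk.1 h
  exact_mod_cast this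

lemma backward (p : Omega1 → Omega1 → ℕ)
    (hmain : ∀ (ε : Omega1) (h : Omega1 → ℕ), ∃ γ : Omega1,
      ∀ b : Finset Omega1, (∀ β ∈ b, γ ≤ β) →
        ∃ Δ : Finset Omega1, (∀ α ∈ Δ, α < ε) ∧
          (∀ α : Omega1, α < ε → α ∉ Δ → ∀ β ∈ b, h α < p α β) ∧
          Set.InjOn (fun x : Omega1 × Omega1 => p x.1 x.2)
            (({α : Omega1 | α < ε} \ ↑Δ) ×ˢ (↑b : Set Omega1))) :
    domNumber = Cardinal.aleph 1 := by
  refine le_antisymm ?_ aleph_one_le_domNumber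
  have hD : domNumber ≤ #(Set.range (fun β : Omega1 => fun n => p (eSeq n) β)) := by
    apply domNumber_le
    intro f
    classical
    set h : Omega1 → ℕ := fun α => if hx : ∃ n, eSeq n = α then f hx.choose else 0 with hh
    have hhe : ∀ n, h (eSeq n) = f n := by
      intro n
      have hx : ∃ m, eSeq m = eSeq n := ⟨n, rfl⟩
      rw [hh]
      simp only [dif_pos hx]
      congr 1
      exact eSeq_injective hx.choose_spec
    obtain ⟨γ, hγ⟩ := hmain epsZero h
    obtain ⟨Δ, -, hdom', -⟩ := hγ {γ} (by simp)
    refine ⟨fun n => p (eSeq n) γ, ⟨γ, rfl⟩, ?_⟩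
    have hfin : {n : ℕ | eSeq n ∈ Δ}.Finite :=
      Set.Finite.preimage (Set.injOn_of_injective eSeq_injective) Δ.finite_toSet
    have hev := hfin.eventually_cofinite_notMem
    rw [Nat.cofinite_eq_atTop] at hev
    filter_upwards [hev] with n hn
    have := hdom' (eSeq n) (eSeq_lt n) hn γ (Finset.mem_singleton_self γ)
    rw [hhe n] at this
    exact this.le
  refine hD.trans ?_
  refine (Cardinal.mk_range_le).trans ?_
  rw [mk_Omega1]

/-! ### Forward direction: infrastructure -/

open scoped Classical

/-- A fixed enumeration of each initial segment of `Omega1`. -/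
def E (β : Omega1) : ℕ → Omega1 :=
  if h : ({α : Omega1 | α < β}).Nonempty then
    ((countable_Iio β).exists_eq_range h).choose
  else fun _ => β

lemma E_range {β : Omega1} (h : ({α : Omega1 | α < β}).Nonempty) :
    {α : Omega1 | α < β} = Set.range (E β) := by
  rw [E, dif_pos h]
  exact ((countable_Iio β).exists_eq_range h).choose_spec

lemma E_lt {β α : Omega1} (hα : α < β) (n : ℕ) : E β n < β := by
  have h : ({x : Omega1 | x < β}).Nonempty := ⟨α, hα⟩
  have : E β n ∈ Set.range (E β) := Set.mem_range_self n
  rw [← E_range h] at this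
  exact this

/-- The index of `α` in the enumeration of the predecessors of `β`. -/
def idx (β α : Omega1) : ℕ :=
  if h : ∃ n, E β n = α then Nat.find h else 0

lemma E_idx {β α : Omega1} (hα : α < β) : E β (idx β α) = α := by
  have hne : ({x : Omega1 | x < β}).Nonempty := ⟨α, hα⟩
  have hmem : α ∈ Set.range (E β) := by
    rw [← E_range hne]; exact hα
  obtain ⟨n, hn⟩ := hmem
  rw [idx, dif_pos ⟨n, hn⟩]
  exact Nat.find_spec (⟨n, hn⟩ : ∃ m, E β m = α)

/-- Codes for finite partial functions, used for bookkeeping. -/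
abbrev Code : Type := List (Omega1 × ℕ)

lemma mk_Omega1_prod_code : #(Omega1 × Code) = #Omega1 := by
  have h1 : #Code = #(Omega1 × ℕ) := Cardinal.mk_list_eq_mk _
  have h2 : #(Omega1 × ℕ) = #Omega1 := by
    rw [Cardinal.mk_prod, Cardinal.lift_id, Cardinal.lift_id, Cardinal.mk_nat, mk_Omega1,
      Cardinal.mul_eq_max (Cardinal.aleph0_le_aleph 1) le_rfl]
    exact max_eq_left (Cardinal.aleph0_le_aleph 1)
  rw [Cardinal.mk_prod, Cardinal.lift_id, Cardinal.lift_id, h1, h2, mk_Omega1,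
    Cardinal.mul_eq_self (Cardinal.aleph0_le_aleph 1)]

/-- A pairing bijection used for bookkeeping. -/
def jEquiv : Omega1 ≃ Omega1 × Code :=
  (Cardinal.eq.1 mk_Omega1_prod_code.symm).some

/-- The bookkeeping code attached to `β`. -/
def bkC (β : Omega1) : Code := (jEquiv β).2

lemma bkC_unbounded (t : Code) (γ : Omega1) : ∃ β, γ ≤ β ∧ bkC β = t := by
  have h : ¬ ({β : Omega1 | bkC β = t}).Countable := by
    intro hc
    apply not_countable_univ
    have himg : (Set.univ : Set Omega1) ⊆ (fun β : Omega1 => (jEquiv β).1) '' {β | bkC β = t} := by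
      intro x _
      refine ⟨jEquiv.symm (x, t), ?_, ?_⟩
      · show (jEquiv (jEquiv.symm (x, t))).2 = t
        rw [Equiv.apply_symm_apply]
      · show (jEquiv (jEquiv.symm (x, t))).1 = x
        rw [Equiv.apply_symm_apply]
    exact (hc.image _).mono himg
  obtain ⟨β, hβ1, hβ2⟩ := unbounded_of_not_countable h γ
  exact ⟨β, hβ2, hβ1⟩

/-- Decoding: the finite set coded by `t`. -/
def dF (t : Code) : Finset Omega1 := (t.map Prod.fst).toFinset

/-- Decoding: the function coded by `t`. -/
def dG (t : Code) : Omega1 → ℕ := fun α =>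
  if h : ∃ q ∈ t, q.1 = α then h.choose.2 else 0

/-- Encoding a finite partial function as a code. -/
def enc (a : Finset Omega1) (g : Omega1 → ℕ) : Code :=
  a.toList.map fun x => (x, g x)

lemma dF_enc (a : Finset Omega1) (g : Omega1 → ℕ) : dF (enc a g) = a := by
  rw [dF, enc, List.map_map]
  simp [Function.comp_def]

lemma dG_enc {a : Finset Omega1} (g : Omega1 → ℕ) {α : Omega1} (hα : α ∈ a) :
    dG (enc a g) α = g α := by
  rw [dG]
  have hex : ∃ q ∈ enc a g, q.1 = α := by
    refine ⟨(α, g α), ?_, rfl⟩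
    rw [enc, List.mem_map]
    exact ⟨α, by simpa using hα, rfl⟩
  rw [dif_pos hex]
  obtain ⟨hq1, hq2⟩ := hex.choose_spec
  obtain ⟨x, -, hxq⟩ := List.mem_map.1
    (show hex.choose ∈ a.toList.map (fun x => (x, g x)) from hq1)
  have h1 : x = α := (congrArg Prod.fst hxq).trans hq2
  subst h1
  exact (congrArg Prod.snd hxq).symm

/-- The Cohen-condition finite set used at stage `β` (with an injectivity guard). -/
def aB (β : Omega1) : Finset Omega1 :=
  if Set.InjOn (dG (bkC β)) ↑(dF (bkC β)) then dF (bkC β) else ∅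

/-- The Cohen-condition function used at stage `β`. -/
def gB (β : Omega1) : Omega1 → ℕ := dG (bkC β)

lemma gB_injOn (β : Omega1) : Set.InjOn (gB β) ↑(aB β) := by
  rw [aB]
  split
  · assumption
  · simp

/-! ### Forward direction: the recursive construction -/

section Construction

variable (d : Omega1 → ℕ → ℕ)

/-- The lower bound which the value at `α` of the fiber over `β` must exceed. -/
def Lb (β : Omega1) (prev : Omega1 → Omega1 → ℕ) (α : Omega1) : ℕ :=
  max ((Finset.range (idx β α + 1)).sup fun k => prev (E β k) (E (E β k) (idx β α)))
    (max
      ((Finset.range (idx β α + 1)).sup fun k =>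
        if α < E β (Nat.unpair k).1 then d (E β (Nat.unpair k).2) (idx (E β (Nat.unpair k).1) α)
        else 0)
      ((aB β).sup (gB β)))

/-- The "large part" of the value at `α` of the fiber over `β`. -/
def J (β : Omega1) (prev : Omega1 → Omega1 → ℕ) (α : Omega1) : ℕ :=
  max (idx β α) (Lb d β prev α) + 1

/-- One step of the recursive construction. -/
def nextF (β : Omega1) (prev : Omega1 → Omega1 → ℕ) : Omega1 → ℕ := fun α =>
  if α < β ∧ α ∉ aB β then Nat.pair (idx β α) (J d β prev α)
  else gB β α

/-- The fibers of the partition: `F d β α` will be `p α β`. -/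
def F : Omega1 → Omega1 → ℕ :=
  (wellFounded_lt (α := Omega1)).fix
    (fun β prev => nextF d β (fun δ => if h : δ < β then prev δ h else fun _ => 0))

/-- The previously constructed fibers, as seen at stage `β`. -/
def Fprev (β : Omega1) : Omega1 → Omega1 → ℕ :=
  fun δ => if _h : δ < β then F d δ else fun _ => 0

lemma F_eq (β : Omega1) : F d β = nextF d β (Fprev d β) :=
  WellFounded.fix_eq _ _ β

lemma Fprev_lt {β δ : Omega1} (hδ : δ < β) : Fprev d β δ = F d δ := by
  rw [Fprev, dif_pos hδ]

lemma F_mem {β α : Omega1} (hA : α ∈ aB β) : F d β α = gB β α := by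
  rw [F_eq, nextF, if_neg]
  intro hc
  exact hc.2 hA

lemma F_pair {β α : Omega1} (hα : α < β) (hA : α ∉ aB β) :
    F d β α = Nat.pair (idx β α) (J d β (Fprev d β) α) := by
  rw [F_eq, nextF, if_pos ⟨hα, hA⟩]

lemma F_gt_Lb {β α : Omega1} (hα : α < β) (hA : α ∉ aB β) :
    Lb d β (Fprev d β) α < F d β α := by
  rw [F_pair d hα hA]
  have h1 : Lb d β (Fprev d β) α < J d β (Fprev d β) α := by
    rw [J]
    exact Nat.lt_succ_of_le (le_max_right _ _)
  exact h1.trans_le (Nat.right_le_pair _ _)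

lemma F_gt_prev {β α : Omega1} (hα : α < β) (hA : α ∉ aB β) {k : ℕ} (hk : k ≤ idx β α) :
    F d (E β k) (E (E β k) (idx β α)) < F d β α := by
  have h1 := F_gt_Lb d hα hA
  have h2 : Fprev d β (E β k) (E (E β k) (idx β α)) ≤ Lb d β (Fprev d β) α :=
    le_trans
      (Finset.le_sup (f := fun k => Fprev d β (E β k) (E (E β k) (idx β α)))
        (Finset.mem_range.2 (Nat.lt_succ_of_le hk)))
      (le_max_left _ _)
  rw [Fprev_lt d (E_lt hα k)] at h2
  omega

lemma F_gt_d {β α : Omega1} (hα : α < β) (hA : α ∉ aB β) {k : ℕ} (hk : k ≤ idx β α)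
    (hcond : α < E β (Nat.unpair k).1) :
    d (E β (Nat.unpair k).2) (idx (E β (Nat.unpair k).1) α) < F d β α := by
  have h1 := F_gt_Lb d hα hA
  have h2 : (if α < E β (Nat.unpair k).1 then
      d (E β (Nat.unpair k).2) (idx (E β (Nat.unpair k).1) α) else 0) ≤
      Lb d β (Fprev d β) α :=
    le_trans
      (Finset.le_sup (f := fun k => if α < E β (Nat.unpair k).1 then
          d (E β (Nat.unpair k).2) (idx (E β (Nat.unpair k).1) α) else 0)
        (Finset.mem_range.2 (Nat.lt_succ_of_le hk)))
      (le_trans (le_max_left _ _) (le_max_right _ _))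
  rw [if_pos hcond] at h2
  omega

lemma F_gt_gB {β α : Omega1} (hα : α < β) (hA : α ∉ aB β) {α' : Omega1} (hα' : α' ∈ aB β) :
    gB β α' < F d β α := by
  have h1 := F_gt_Lb d hα hA
  have h2 : gB β α' ≤ Lb d β (Fprev d β) α :=
    le_trans (Finset.le_sup hα') (le_trans (le_max_right _ _) (le_max_right _ _))
  omega

lemma injOn_F (β : Omega1) : Set.InjOn (F d β) {α : Omega1 | α < β} := by
  intro α hα α' hα' heq
  simp only [Set.mem_setOf_eq] at hα hα'
  by_cases h1 : α ∈ aB β <;> by_cases h2 : α' ∈ aB β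
  · exact gB_injOn β (by exact_mod_cast h1) (by exact_mod_cast h2)
      (by rw [← F_mem d h1, ← F_mem d h2, heq])
  · exfalso
    have := F_gt_gB d hα' h2 (α' := α) h1
    rw [← F_mem d h1, heq] at this
    exact lt_irrefl _ this
  · exfalso
    have := F_gt_gB d hα h1 (α' := α') h2
    rw [← F_mem d h2, ← heq] at this
    exact lt_irrefl _ this
  · have hp := F_pair d hα h1
    have hp' := F_pair d hα' h2
    rw [hp, hp'] at heq
    have := (Nat.pair_eq_pair.1 heq).1
    calc α = E β (idx β α) := (E_idx hα).symm
    _ = E β (idx β α') := by rw [this]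
    _ = α' := E_idx hα'

lemma cross {β β' α α' : Omega1} (hββ' : β < β') (hα : α < β) (hα' : α' < β')
    (hA : α ∉ aB β) (hA' : α' ∉ aB β') (heq : F d β α = F d β' α') :
    idx β α = idx β' α' ∧ idx β α < idx β' β := by
  have hp := F_pair d hα hA
  have hp' := F_pair d hα' hA'
  rw [hp, hp'] at heq
  have hidx := (Nat.pair_eq_pair.1 heq).1
  refine ⟨hidx, ?_⟩
  by_contra hc
  push_neg at hc
  have hk : idx β' β ≤ idx β' α' := hidx ▸ hc
  have := F_gt_prev d hα' hA' hk
  rw [E_idx hββ', ← hidx, E_idx hα] at this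
  rw [F_pair d hα hA, F_pair d hα' hA'] at this
  omega

end Construction

/-! ### Forward direction: the global properties -/

section Properties

variable (d : Omega1 → ℕ → ℕ)

lemma injectiveFibers_F : InjectiveFibers (fun α β => F d β α) := by
  intro α α' β h1 h2 heq
  have := injOn_F d β (Set.mem_setOf_eq ▸ h1.trans h2) (Set.mem_setOf_eq ▸ h2) heq
  exact h1.ne this

lemma almostDisjointFibers_F : AlmostDisjointFibers (fun α β => F d β α) := by
  intro β β' hββ'
  apply Set.Finite.subset (Set.Finite.union (Set.Finite.union
    ((aB β).finite_toSet.image (gB β)) ((aB β').finite_toSet.image (gB β')))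
    (((Finset.range (idx β' β)).finite_toSet.image (fun m => F d β' (E β' m)))))
  rintro x ⟨⟨α, hαβ, hx⟩, ⟨α', hα'β, hx'⟩⟩
  replace hx : F d β α = x := hx
  replace hx' : F d β' α' = x := hx'
  by_cases h1 : α ∈ aB β
  · exact Or.inl (Or.inl ⟨α, h1, by rw [← hx, F_mem d h1]⟩)
  by_cases h2 : α' ∈ aB β'
  · exact Or.inl (Or.inr ⟨α', h2, by rw [← hx', F_mem d h2]⟩)
  · right
    have hcr := cross d hββ' hαβ (hα'β.trans hββ') h1 h2 (by rw [hx, hx'])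
    refine ⟨idx β α, by simpa using hcr.2, ?_⟩
    have hE : E β' (idx β α) = α' := by
      rw [hcr.1]
      exact E_idx (hα'β.trans hββ')
    show F d β' (E β' (idx β α)) = x
    rw [hE]
    exact hx'

lemma cohenFibers_F : CohenFibers (fun α β => F d β α) := by
  intro a g hinj γ
  obtain ⟨β, hγβ, hbk⟩ := bkC_unbounded (enc a g) γ
  have hdF : dF (bkC β) = a := by rw [hbk, dF_enc]
  have hdG : ∀ α ∈ a, dG (bkC β) α = g α := fun α hα => by rw [hbk, dG_enc g hα]
  have hguard : Set.InjOn (dG (bkC β)) ↑(dF (bkC β)) := by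
    rw [hdF]
    intro x hx y hy hxy
    rw [hdG x hx, hdG y hy] at hxy
    exact hinj hx hy hxy
  have haB : aB β = a := by rw [aB, if_pos hguard, hdF]
  refine ⟨β, hγβ, fun α hαa hαβ => ?_⟩
  have hmem : α ∈ aB β := haB ▸ hαa
  show F d β α = g α
  rw [F_mem d hmem, gB, hdG α hαa]

lemma main_F (hd : ∀ f : ℕ → ℕ, ∃ ξ, ∀ᶠ n in Filter.atTop, f n ≤ d ξ n) :
    ∀ (ε : Omega1) (h : Omega1 → ℕ), ∃ γ : Omega1,
      ∀ b : Finset Omega1, (∀ β ∈ b, γ ≤ β) →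
        ∃ Δ : Finset Omega1, (∀ α ∈ Δ, α < ε) ∧
          (∀ α : Omega1, α < ε → α ∉ Δ → ∀ β ∈ b, h α < F d β α) ∧
          Set.InjOn (fun x : Omega1 × Omega1 => F d x.2 x.1)
            (({α : Omega1 | α < ε} \ ↑Δ) ×ˢ (↑b : Set Omega1)) := by
  intro ε h
  by_cases hne : ∃ α : Omega1, α < ε
  case neg =>
    refine ⟨Classical.arbitrary _, fun b hb => ⟨∅, by simp, ?_, ?_⟩⟩
    · intro α hαε
      exact absurd ⟨α, hαε⟩ hne
    · intro x hx
      exact absurd ⟨x.1, hx.1.1⟩ hne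
  case pos =>
    obtain ⟨ξ, hξ⟩ := hd (fun n => h (E ε n) + 1)
    obtain ⟨N, hN⟩ := Filter.eventually_atTop.1 hξ
    obtain ⟨γ, hγ⟩ := exists_gt (max ε ξ)
    refine ⟨γ, fun b hb => ?_⟩
    have hεβ : ∀ β ∈ b, ε < β := fun β hβ =>
      lt_of_lt_of_le ((le_max_left ε ξ).trans_lt hγ) (hb β hβ)
    have hξβ : ∀ β ∈ b, ξ < β := fun β hβ =>
      lt_of_lt_of_le ((le_max_right ε ξ).trans_lt hγ) (hb β hβ)
    set kk : Omega1 → ℕ := fun β => Nat.pair (idx β ε) (idx β ξ) with hkk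
    set Δ0 : Finset Omega1 :=
      (b.biUnion fun β => aB β) ∪
      (b.biUnion fun β => (Finset.range (kk β + 1)).image (E β)) ∪
      ((Finset.range N).image (E ε)) ∪
      (b.biUnion fun β => b.biUnion fun β' =>
        (Finset.range (idx β' β + 1)).image (E β) ∪
        (Finset.range (idx β' β + 1)).image (E β')) with hΔ0
    have hmem1 : ∀ β ∈ b, ∀ α, α ∈ aB β → α ∈ Δ0 := by
      intro β hβ α hα
      rw [hΔ0]
      refine Finset.mem_union.2 (Or.inl (Finset.mem_union.2 (Or.inl (Finset.mem_union.2
        (Or.inl (Finset.mem_biUnion.2 ⟨β, hβ, hα⟩))))))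
    have hmem2 : ∀ β ∈ b, ∀ m, m < kk β + 1 → E β m ∈ Δ0 := by
      intro β hβ m hm
      rw [hΔ0]
      refine Finset.mem_union.2 (Or.inl (Finset.mem_union.2 (Or.inl (Finset.mem_union.2
        (Or.inr (Finset.mem_biUnion.2 ⟨β, hβ, Finset.mem_image.2
          ⟨m, Finset.mem_range.2 hm, rfl⟩⟩))))))
    have hmem3 : ∀ m, m < N → E ε m ∈ Δ0 := by
      intro m hm
      rw [hΔ0]
      exact Finset.mem_union.2 (Or.inl (Finset.mem_union.2 (Or.inr
        (Finset.mem_image.2 ⟨m, Finset.mem_range.2 hm, rfl⟩))))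
    have hmem4 : ∀ β ∈ b, ∀ β' ∈ b, ∀ m, m < idx β' β + 1 → E β m ∈ Δ0 := by
      intro β hβ β' hβ' m hm
      rw [hΔ0]
      exact Finset.mem_union.2 (Or.inr (Finset.mem_biUnion.2 ⟨β, hβ,
        Finset.mem_biUnion.2 ⟨β', hβ', Finset.mem_union.2 (Or.inl
          (Finset.mem_image.2 ⟨m, Finset.mem_range.2 hm, rfl⟩))⟩⟩))
    have hmem4' : ∀ β ∈ b, ∀ β' ∈ b, ∀ m, m < idx β' β + 1 → E β' m ∈ Δ0 := by
      intro β hβ β' hβ' m hm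
      rw [hΔ0]
      exact Finset.mem_union.2 (Or.inr (Finset.mem_biUnion.2 ⟨β, hβ,
        Finset.mem_biUnion.2 ⟨β', hβ', Finset.mem_union.2 (Or.inr
          (Finset.mem_image.2 ⟨m, Finset.mem_range.2 hm, rfl⟩))⟩⟩))
    refine ⟨Δ0.filter (· < ε), fun α hα => (Finset.mem_filter.1 hα).2, ?_, ?_⟩
    · -- domination
      intro α hαε hαΔ β hβ
      have hαn : α ∉ Δ0 := fun hc => hαΔ (Finset.mem_filter.2 ⟨hc, hαε⟩)
      have hαβ : α < β := hαε.trans (hεβ β hβ)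
      have hA : α ∉ aB β := fun hc => hαn (hmem1 β hβ α hc)
      have hk : kk β ≤ idx β α := by
        by_contra hc
        push_neg at hc
        exact hαn (E_idx hαβ ▸ hmem2 β hβ (idx β α) (by omega))
      have hu : (Nat.unpair (kk β)).1 = idx β ε ∧ (Nat.unpair (kk β)).2 = idx β ξ := by
        rw [hkk]
        simp [Nat.unpair_pair]
      have hEε : E β (idx β ε) = ε := E_idx (hεβ β hβ)
      have hEξ : E β (idx β ξ) = ξ := E_idx (hξβ β hβ)
      have hcond : α < E β (Nat.unpair (kk β)).1 := by rw [hu.1, hEε]; exact hαε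
      have hgt := F_gt_d d hαβ hA hk hcond
      rw [hu.1, hu.2, hEε, hEξ] at hgt
      have hNle : N ≤ idx ε α := by
        by_contra hc
        push_neg at hc
        exact hαn (E_idx hαε ▸ hmem3 (idx ε α) hc)
      have hdξ := hN (idx ε α) hNle
      rw [E_idx hαε] at hdξ
      show h α < F d β α
      omega
    · -- injectivity on the product
      rintro ⟨α, β⟩ hx ⟨α', β'⟩ hy heq
      obtain ⟨⟨hαε, hαΔ⟩, hβb⟩ := hx
      obtain ⟨⟨hα'ε, hα'Δ⟩, hβ'b⟩ := hy
      simp only [Set.mem_setOf_eq] at hαε hα'ε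
      simp only [Finset.mem_coe] at hβb hβ'b
      have hαn : α ∉ Δ0 := fun hc => hαΔ (Finset.mem_filter.2 ⟨hc, hαε⟩)
      have hα'n : α' ∉ Δ0 := fun hc => hα'Δ (Finset.mem_filter.2 ⟨hc, hα'ε⟩)
      have hαβ : α < β := hαε.trans (hεβ β hβb)
      have hα'β' : α' < β' := hα'ε.trans (hεβ β' hβ'b)
      have hA : α ∉ aB β := fun hc => hαn (hmem1 β hβb α hc)
      have hA' : α' ∉ aB β' := fun hc => hα'n (hmem1 β' hβ'b α' hc)
      simp only at heq
      rcases lt_trichotomy β β' with hlt | heqβ | hgt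
      · exfalso
        have hcr := cross d hlt hαβ hα'β' hA hA' heq
        exact hαn (E_idx hαβ ▸ hmem4 β hβb β' hβ'b (idx β α) (by omega))
      · subst heqβ
        have : α = α' := injOn_F d β hαβ (show α' ∈ {x : Omega1 | x < β} from hα'β') heq
        rw [this]
      · exfalso
        have hcr := cross d hgt hα'β' hαβ hA' hA heq.symm
        exact hα'n (E_idx hα'β' ▸ hmem4 β' hβ'b β hβb (idx β' α') (by omega))

end Properties

lemma forward (hdn : domNumber = Cardinal.aleph 1) :
    ∃ p : Omega1 → Omega1 → ℕ,
      InjectiveFibers p ∧ AlmostDisjointFibers p ∧ CohenFibers p ∧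
      ∀ (ε : Omega1) (h : Omega1 → ℕ), ∃ γ : Omega1,
        ∀ b : Finset Omega1, (∀ β ∈ b, γ ≤ β) →
          ∃ Δ : Finset Omega1, (∀ α ∈ Δ, α < ε) ∧
            (∀ α : Omega1, α < ε → α ∉ Δ → ∀ β ∈ b, h α < p α β) ∧
            Set.InjOn (fun x : Omega1 × Omega1 => p x.1 x.2)
              (({α : Omega1 | α < ε} \ ↑Δ) ×ˢ (↑b : Set Omega1)) := by
  obtain ⟨D, hD, hdom⟩ := domNumber_mem
  rw [hdn] at hD
  have hcard : #Omega1 = #(↥D) := by rw [mk_Omega1, hD]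
  obtain ⟨e⟩ := Cardinal.eq.1 hcard
  set d : Omega1 → ℕ → ℕ := fun ξ => (e ξ : ℕ → ℕ) with hd_def
  have hd : ∀ f : ℕ → ℕ, ∃ ξ, ∀ᶠ n in Filter.atTop, f n ≤ d ξ n := by
    intro f
    obtain ⟨g, hgD, hg⟩ := hdom f
    refine ⟨e.symm ⟨g, hgD⟩, ?_⟩
    rw [hd_def]
    simpa using hg
  exact ⟨fun α β => F d β α, injectiveFibers_F d, almostDisjointFibers_F d,
    cohenFibers_F d, main_F d hd⟩

end S13

/-- `𝔡 = ℵ₁` iff there is a partition `p : [ω₁]² → ω` with injective, almost-disjoint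
and Cohen fibers such that for every `ε < ω₁` and every `h : ε → ω` there is `γ < ω₁`
such that for every finite `b ⊆ ω₁ \ γ` there is a finite `Δ ⊆ ε` with:
(i) `h(α) < p(α,β)` for all `α ∈ ε \ Δ` and `β ∈ b`, and
(ii) `p` is injective on `(ε \ Δ) × b`. -/
theorem statement13 :
    domNumber = Cardinal.aleph 1 ↔
      ∃ p : Omega1 → Omega1 → ℕ,
        InjectiveFibers p ∧ AlmostDisjointFibers p ∧ CohenFibers p ∧
        ∀ (ε : Omega1) (h : Omega1 → ℕ), ∃ γ : Omega1,
          ∀ b : Finset Omega1, (∀ β ∈ b, γ ≤ β) →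
            ∃ Δ : Finset Omega1, (∀ α ∈ Δ, α < ε) ∧
              (∀ α : Omega1, α < ε → α ∉ Δ → ∀ β ∈ b, h α < p α β) ∧
              Set.InjOn (fun x : Omega1 × Omega1 => p x.1 x.2)
                (({α : Omega1 | α < ε} \ ↑Δ) ×ˢ (↑b : Set Omega1)) := by
  constructor
  · exact S13.forward
  · rintro ⟨p, -, -, -, hmain⟩
    exact S13.backward p hmain
end
end

section
/- Let p:[ω₁]²→ω be a partition and c:[ω₁]²→ω a coloring. For every β < ω₁, the set D_β := {q ∈ ℚ(p,c) : β ∈ a_q} is dense in ℚ(p,c); that is, for every condition q ∈ ℚ(p,c) there exists a condition q' ∈ ℚ(p,c) with q' ≤ q and β ∈ a_{q'}. Indeed, for all sufficiently large k < ω, the triple q^∧(k,{β}) — obtained from q by adding β to a_q (if β ∉ a_q) and setting f(β) := k, keeping w_q unchanged — is such a condition. -/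
noncomputable section

open Cardinal Set Ordinal

/-- A condition of the poset `ℚ(p,c)`: a triple `(a, f, w)` where `a` is a finite
subset of `ω₁`, `f : a → ω` (modelled as a total function, only its restriction to
`a` is relevant), and `w` is a function from a finite subset `wdom` of `ω × ω` to `ω`
(modelled likewise), such that whenever `α < β` in `a` and `f(α) = f(β)`, we have
`(f(α), p(α,β)) ∈ wdom` and `c(α,β) = w(f(α), p(α,β))`. -/
structure QCond (p c : Omega1 → Omega1 → ℕ) where
  a : Finset Omega1
  f : Omega1 → ℕ
  wdom : Finset (ℕ × ℕ)
  w : ℕ × ℕ → ℕ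
  compat : ∀ α ∈ a, ∀ β ∈ a, α < β → f α = f β →
    (f α, p α β) ∈ wdom ∧ c α β = w (f α, p α β)

/-- The extension order of `ℚ(p,c)`: `q' ≤ q` iff `a_q ⊆ a_{q'}`, `f_{q'}` extends
`f_q`, and `w_{q'}` extends `w_q`. -/
def QLe {p c : Omega1 → Omega1 → ℕ} (q' q : QCond p c) : Prop :=
  q.a ⊆ q'.a ∧ (∀ α ∈ q.a, q'.f α = q.f α) ∧
    q.wdom ⊆ q'.wdom ∧ ∀ x ∈ q.wdom, q'.w x = q.w x

/-- For every `β < ω₁`, the set `D_β = {q ∈ ℚ(p,c) : β ∈ a_q}` is dense: every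
condition `q` has an extension `q'` with `β ∈ a_{q'}`. Indeed, for all sufficiently
large `k < ω`, the triple `q^∧(k,{β})` — obtained from `q` by adding `β` to `a_q`
(if `β ∉ a_q`) and setting `f(β) := k`, keeping `w_q` unchanged — is such a
condition. -/
theorem statement15 (p c : Omega1 → Omega1 → ℕ) (β : Omega1) :
    (∀ q : QCond p c, ∃ q' : QCond p c, QLe q' q ∧ β ∈ q'.a) ∧
    (∀ q : QCond p c, ∀ᶠ k in Filter.atTop,
      ∃ q' : QCond p c, q'.a = insert β q.a ∧
        q'.f = (if β ∈ q.a then q.f else Function.update q.f β k) ∧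
        q'.wdom = q.wdom ∧ q'.w = q.w ∧ QLe q' q ∧ β ∈ q'.a) := by
  have key : ∀ q : QCond p c, ∀ᶠ k in Filter.atTop,
      ∃ q' : QCond p c, q'.a = insert β q.a ∧
        q'.f = (if β ∈ q.a then q.f else Function.update q.f β k) ∧
        q'.wdom = q.wdom ∧ q'.w = q.w ∧ QLe q' q ∧ β ∈ q'.a := by
    intro q
    by_cases hβ : β ∈ q.a
    · refine Filter.Eventually.of_forall fun k =>
        ⟨q, (Finset.insert_eq_self.2 hβ).symm, by simp [hβ], rfl, rfl,
          ⟨subset_rfl, fun _ _ => rfl, subset_rfl, fun _ _ => rfl⟩, hβ⟩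
    · rw [Filter.eventually_atTop]
      refine ⟨(q.a.image q.f).sup id + 1, fun k hk => ?_⟩
      have hne : ∀ α ∈ q.a, q.f α ≠ k := by
        intro α hα h
        have : q.f α ≤ (q.a.image q.f).sup id :=
          Finset.le_sup (f := id) (Finset.mem_image_of_mem _ hα)
        omega
      set f' := Function.update q.f β k with hf'
      have hfeq : ∀ α ∈ q.a, f' α = q.f α := fun α hα =>
        Function.update_of_ne (fun h => hβ (by rw [← h]; exact hα)) _ _
      have hfβ : f' β = k := Function.update_self _ _ _
      refine ⟨⟨insert β q.a, f', q.wdom, q.w, ?_⟩, rfl, by simp [hβ], rfl, rfl,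
        ⟨Finset.subset_insert _ _, hfeq, subset_rfl, fun _ _ => rfl⟩,
        Finset.mem_insert_self _ _⟩
      intro α hα γ hγ hlt heq
      rcases Finset.mem_insert.1 hα with rfl | hα'
      · rcases Finset.mem_insert.1 hγ with rfl | hγ'
        · exact absurd rfl hlt.ne
        · exfalso
          rw [hfβ, hfeq γ hγ'] at heq
          exact hne γ hγ' heq.symm
      · rcases Finset.mem_insert.1 hγ with rfl | hγ'
        · exfalso
          rw [hfβ, hfeq α hα'] at heq
          exact hne α hα' heq
        · rw [hfeq α hα'] at heq ⊢
          rw [hfeq γ hγ'] at heq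
          exact q.compat α hα' γ hγ' hlt heq
  refine ⟨fun q => ?_, key⟩
  obtain ⟨k, q', -, -, -, -, hle, hmem⟩ := (key q).exists
  exact ⟨q', hle, hmem⟩
end
end
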